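/- (LCE acceleration for NGS/PGS, equal case.) Let 1 ≤ l < k < r ≤ n be indices such that x_l ≻ x_k and x_m ≺ x_k for all m ∈ (l,k), and x_r ≻ x_k and x_m ≺ x_k for all m ∈ (k,r) (i.e., l = prev₋₁[k] and r = next₋₁[k]). If lce(l,k) = lce(k,r), then lce(l,r) ≥ lce(k,r); moreover, either max{j ∈ [1,r) : x_j ≻ x_r} = l or min{j ∈ (l,n] : x_j ≻ x_l} = r. -/

import Mathlib

namespace LynArr

variable {α : Type*} [LinearOrder α]

/-- Strict lexicographic order on words:
`u ≺ v` iff `u` is a proper prefix of `v`, or at the first differing position `u` is smaller. -/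
def Llt (u v : List α) : Prop := List.Lex (· < ·) u v

/-- The suffix `x_i = x[i..n]` (1-based indexing). -/
def suff (x : List α) (i : ℕ) : List α := x.drop (i - 1)

/-- The subword `x[i..j]` (1-based, inclusive). -/
def sub (x : List α) (i j : ℕ) : List α := (x.drop (i - 1)).take (j - i + 1)

/-- `w` is a Lyndon word: nonempty and lexicographically smaller than
all of its nonempty proper suffixes. -/
def IsLyndon (w : List α) : Prop :=
  w ≠ [] ∧ ∀ k, 0 < k → k < w.length → Llt w (w.drop k)

/-- `w` is an inverse Lyndon word: nonempty and lexicographically greater than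
all of its nonempty proper suffixes. -/
def IsInvLyndon (w : List α) : Prop :=
  w ≠ [] ∧ ∀ k, 0 < k → k < w.length → Llt (w.drop k) w

/-- `lce x i j`: the length of the longest common prefix of the suffixes `x_i` and `x_j`. -/
def lce (x : List α) (i j : ℕ) : ℕ :=
  (((suff x i).zip (suff x j)).takeWhile fun p => p.1 == p.2).length

/-- abstract lcp -/
def lcp (u v : List α) : ℕ := ((u.zip v).takeWhile fun p => p.1 == p.2).length

lemma lce_eq_lcp (x : List α) (i j : ℕ) : lce x i j = lcp (suff x i) (suff x j) := rfl

lemma lcp_le (u v : List α) : lcp u v ≤ min u.length v.length := by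
  calc lcp u v ≤ (u.zip v).length := (List.takeWhile_prefix _).length_le
    _ = min u.length v.length := List.length_zip ..

lemma take_lcp_eq (u v : List α) : u.take (lcp u v) = v.take (lcp u v) := by
  induction u generalizing v with
  | nil => simp [lcp]
  | cons a u ih =>
    cases v with
    | nil => simp [lcp]
    | cons b v =>
      by_cases h : a = b
      · subst h
        simp only [lcp, List.zip_cons_cons, List.takeWhile_cons, beq_self_eq_true,
          if_true, List.length_cons, List.take_succ_cons, List.cons.injEq, true_and]
        exact ih v
      · simp [lcp, List.takeWhile_cons, h]

lemma le_lcp (t : ℕ) (u v : List α) (h1 : t ≤ u.length) (h2 : t ≤ v.length)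
    (h : u.take t = v.take t) : t ≤ lcp u v := by
  induction t generalizing u v with
  | zero => exact Nat.zero_le _
  | succ t ih =>
    match u, v with
    | a :: u, b :: v =>
      simp only [List.take_succ_cons, List.cons.injEq] at h
      obtain ⟨rfl, h⟩ := h
      simp only [lcp, List.zip_cons_cons, List.takeWhile_cons, beq_self_eq_true, if_true,
        List.length_cons]
      exact Nat.succ_le_succ (ih u v (Nat.le_of_succ_le_succ h1) (Nat.le_of_succ_le_succ h2) h)

set_option linter.deprecated false in
theorem lce_acceleration_inverse_eq {α : Type*} [LinearOrder α] (x : List α) (n l k r : ℕ)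
    (hn : n = x.length)
    (hl1 : 1 ≤ l) (hlk : l < k) (hkr : k < r) (hrn : r ≤ n)
    (hlk' : Llt (suff x k) (suff x l))
    (hlk'' : ∀ m, l < m → m < k → Llt (suff x m) (suff x k))
    (hkr' : Llt (suff x k) (suff x r))
    (hkr'' : ∀ m, k < m → m < r → Llt (suff x m) (suff x k))
    (heq : lce x l k = lce x k r) :
    lce x k r ≤ lce x l r ∧
      (IsGreatest {j | 1 ≤ j ∧ j < r ∧ Llt (suff x r) (suff x j)} l ∨
        IsLeast {j | l < j ∧ j ≤ n ∧ Llt (suff x l) (suff x j)} r) := by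
  have htrans : ∀ u v w : List α, Llt u v → Llt v w → Llt u w := fun u v w h1 h2 =>
    List.lex_trans (fun h₁ h₂ => lt_trans h₁ h₂) h1 h2
  have hasymm : ∀ u v : List α, Llt u v → ¬ Llt v u := fun u v h1 h2 =>
    (List.Lex.asymm (α := α) (· < ·)).asymm u v h1 h2
  constructor
  · -- lce part
    set t := lce x k r with ht
    rw [lce_eq_lcp]
    have e1 : (suff x l).take t = (suff x k).take t := by
      rw [← heq]; exact take_lcp_eq _ _
    have e2 : (suff x k).take t = (suff x r).take t := take_lcp_eq _ _
    have h1 : t ≤ (suff x l).length := by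
      rw [← heq]; exact le_trans (lcp_le _ _) (min_le_left _ _)
    have h2 : t ≤ (suff x r).length := le_trans (lcp_le _ _) (min_le_right _ _)
    exact le_lcp t _ _ h1 h2 (e1.trans e2)
  · -- trichotomy on suff x l vs suff x r
    have hne : suff x l ≠ suff x r := by
      intro h
      have := congrArg List.length h
      simp only [suff, List.length_drop] at this
      omega
    rcases trichotomous_of (List.Lex (α := α) (· < ·)) (suff x l) (suff x r) with h | h | h
    · -- s_l ≺ s_r : next₋₁[l] = r
      right
      refine ⟨⟨hlk.trans hkr, hrn, h⟩, ?_⟩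
      intro j ⟨hj1, hj2, hj3⟩
      by_contra hjr
      push_neg at hjr
      have : Llt (suff x j) (suff x l) := by
        rcases lt_trichotomy j k with hc | hc | hc
        · exact htrans _ _ _ (hlk'' j hj1 hc) hlk'
        · subst hc; exact hlk'
        · exact htrans _ _ _ (hkr'' j hc hjr) hlk'
      exact hasymm _ _ hj3 this
    · exact absurd h hne
    · -- s_r ≺ s_l : prev₋₁[r] = l
      left
      refine ⟨⟨hl1, hlk.trans hkr, h⟩, ?_⟩
      intro j ⟨hj1, hj2, hj3⟩
      by_contra hjl
      push_neg at hjl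
      have : Llt (suff x j) (suff x r) := by
        rcases lt_trichotomy j k with hc | hc | hc
        · exact htrans _ _ _ (hlk'' j hjl hc) hkr'
        · subst hc; exact hkr'
        · exact htrans _ _ _ (hkr'' j hc hj2) hkr'
      exact hasymm _ _ hj3 this

end LynArr
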